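/- arXiv:2208.05412 — 2 statements merged into one kernel-verified Lean document; each statement's English description precedes it below -/
import Mathlib

section
/- (Lemma 3.) Let m₁, …, m_d be positive integers and let i, j ∈ [d]. For any two arrays X of size (m₁+δ₁(i)) × ⋯ × (m_d+δ_d(i)) and Y of size (m₁+δ₁(j)) × ⋯ × (m_d+δ_d(j)) over Σ_q, where δ_ℓ(i) = 1 if ℓ = i and 0 otherwise, it holds that D_{e_i}(X) ∩ D_{e_j}(Y) ≠ ∅ if and only if I_{e_j}(X) ∩ I_{e_i}(Y) ≠ ∅. -/
/-- A `q`-ary `d`-dimensional array: a size vector `size : Fin d → ℕ` together with an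
entry of the alphabet `Fin q` for every index tuple inside the box
`[size 0] × ⋯ × [size (d-1)]`. -/
structure Arr (q d : ℕ) where
  size : Fin d → ℕ
  val : ∀ x : Fin d → ℕ, (∀ i, x i < size i) → Fin q

/-- The index map associated with inserting a hyperplane at position `k` along axis `i`:
coordinates below `k` stay put, the others are shifted up by one (so that position `k`
along axis `i` is the freshly inserted hyperplane). -/
def insIdx {d : ℕ} (i : Fin d) (k : ℕ) (x : Fin d → ℕ) : Fin d → ℕ :=
  fun j => if j = i then (if x i < k then x i else x i + 1) else x j

/-- `InsertsTo i A B`: the array `B` is obtained from the array `A` by a single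
`x_i`-insertion, i.e. by inserting one `(d-1)`-dimensional hyperplane (with arbitrary
entries) orthogonal to the `x_i`-axis. -/
def InsertsTo {q d : ℕ} (i : Fin d) (A B : Arr q d) : Prop :=
  (∀ j, B.size j = if j = i then A.size j + 1 else A.size j) ∧
  ∃ k ≤ A.size i, ∀ (x : Fin d → ℕ) (hx : ∀ j, x j < A.size j)
    (hx' : ∀ j, insIdx i k x j < B.size j),
    A.val x hx = B.val (insIdx i k x) hx'

/-- `DeletesTo i A B`: the array `B` is obtained from `A` by a single `x_i`-deletion,
the inverse operation of an `x_i`-insertion. -/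
def DeletesTo {q d : ℕ} (i : Fin d) (A B : Arr q d) : Prop :=
  InsertsTo i B A

/-- `Steps R t A B`: the array `B` is obtained from the array `A` by performing, for each
axis `i`, exactly `t i` operations of type `R i` (in some order). -/
inductive Steps {q d : ℕ} (R : Fin d → Arr q d → Arr q d → Prop) :
    (Fin d → ℕ) → Arr q d → Arr q d → Prop
  | refl (A : Arr q d) : Steps R 0 A A
  | step {t : Fin d → ℕ} {A B C : Arr q d} (i : Fin d) :
      R i A B → Steps R t B C → Steps R (t + Pi.single i 1) A C

/-- The deletion ball `D_t(X)`: all arrays obtainable from `X` by a `t`-deletion,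
i.e. by `t i` `x_i`-deletions for each axis `i`. -/
def delBall {q d : ℕ} (t : Fin d → ℕ) (X : Arr q d) : Set (Arr q d) :=
  {Y | Steps DeletesTo t X Y}

/-- The insertion ball `I_t(X)`: all arrays obtainable from `X` by a `t`-insertion,
i.e. by `t i` `x_i`-insertions for each axis `i`. -/
def insBall {q d : ℕ} (t : Fin d → ℕ) (X : Arr q d) : Set (Arr q d) :=
  {Y | Steps InsertsTo t X Y}

/-- The insertion-deletion ball `ID_t(X)`: all arrays obtainable from `X` by a
`t^del`-deletion followed by a `t^ins`-insertion, for some decomposition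
`t = t^ins + t^del`. -/
def insDelBall {q d : ℕ} (t : Fin d → ℕ) (X : Arr q d) : Set (Arr q d) :=
  {Z | ∃ tins tdel : Fin d → ℕ, tins + tdel = t ∧
    ∃ W ∈ delBall tdel X, Z ∈ insBall tins W}

/-- `Σ_q^{n^{⊗d}}`: the set of `q`-ary `d`-dimensional arrays of cubic size `n × ⋯ × n`. -/
def cube (q d n : ℕ) : Set (Arr q d) := {A | A.size = fun _ => n}

/-- A code `C` is a `t`-deletion-correcting code if the deletion balls `D_t(X)`, `X ∈ C`,
are pairwise disjoint. -/
def IsDelCode {q d : ℕ} (t : Fin d → ℕ) (C : Set (Arr q d)) : Prop :=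
  ∀ X ∈ C, ∀ Y ∈ C, X ≠ Y → delBall t X ∩ delBall t Y = ∅

/-- A code `C` is a `t`-insertion-correcting code if the insertion balls `I_t(X)`,
`X ∈ C`, are pairwise disjoint. -/
def IsInsCode {q d : ℕ} (t : Fin d → ℕ) (C : Set (Arr q d)) : Prop :=
  ∀ X ∈ C, ∀ Y ∈ C, X ≠ Y → insBall t X ∩ insBall t Y = ∅

/-- A code `C` is a `t`-insdel-correcting code if the insertion-deletion balls `ID_t(X)`,
`X ∈ C`, are pairwise disjoint. -/
def IsInsDelCode {q d : ℕ} (t : Fin d → ℕ) (C : Set (Arr q d)) : Prop :=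
  ∀ X ∈ C, ∀ Y ∈ C, X ≠ Y → insDelBall t X ∩ insDelBall t Y = ∅

section Aux

variable {q d : ℕ}

/-- The index map for deleting the hyperplane at position `k` along axis `i`. -/
def delIdx {d : ℕ} (i : Fin d) (k : ℕ) (x : Fin d → ℕ) : Fin d → ℕ :=
  fun j => if j = i then (if x i < k then x i else x i - 1) else x j

lemma Arr.val_cast (A : Arr q d) {x y : Fin d → ℕ} (h : x = y)
    (hx : ∀ i, x i < A.size i) (hy : ∀ i, y i < A.size i) :
    A.val x hx = A.val y hy := by subst h; rfl

lemma insIdx_self {i : Fin d} {k : ℕ} {x : Fin d → ℕ} :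
    insIdx i k x i = if x i < k then x i else x i + 1 := by simp [insIdx]

lemma insIdx_ne {i ℓ : Fin d} (h : ℓ ≠ i) {k : ℕ} {x : Fin d → ℕ} :
    insIdx i k x ℓ = x ℓ := by simp [insIdx, h]

lemma delIdx_self {i : Fin d} {k : ℕ} {x : Fin d → ℕ} :
    delIdx i k x i = if x i < k then x i else x i - 1 := by simp [delIdx]

lemma delIdx_ne {i ℓ : Fin d} (h : ℓ ≠ i) {k : ℕ} {x : Fin d → ℕ} :
    delIdx i k x ℓ = x ℓ := by simp [delIdx, h]

lemma delIdx_insIdx (i : Fin d) (k : ℕ) (x : Fin d → ℕ) :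
    delIdx i k (insIdx i k x) = x := by
  funext ℓ
  by_cases h : ℓ = i
  · subst h; simp only [delIdx, insIdx, if_pos rfl]; split_ifs <;> omega
  · simp [delIdx, insIdx, h]

lemma insIdx_delIdx {i : Fin d} {k : ℕ} {x : Fin d → ℕ} (h : x i ≠ k) :
    insIdx i k (delIdx i k x) = x := by
  funext ℓ
  by_cases hℓ : ℓ = i
  · subst hℓ; simp only [insIdx, delIdx, if_pos rfl]; split_ifs <;> omega
  · simp [insIdx, delIdx, hℓ]

lemma insIdx_comm {i j : Fin d} (hij : i ≠ j) (k l : ℕ) (x : Fin d → ℕ) :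
    insIdx i k (insIdx j l x) = insIdx j l (insIdx i k x) := by
  funext ℓ
  by_cases h1 : ℓ = i <;> by_cases h2 : ℓ = j <;>
    simp_all [insIdx, Ne.symm hij] <;> split_ifs <;> omega

lemma delIdx_insIdx_comm {i j : Fin d} (hij : i ≠ j) (k l : ℕ) (x : Fin d → ℕ) :
    delIdx j l (insIdx i k x) = insIdx i k (delIdx j l x) := by
  funext ℓ
  by_cases h1 : ℓ = i <;> by_cases h2 : ℓ = j <;>
    simp_all [insIdx, delIdx, Ne.symm hij] <;> split_ifs <;> omega

lemma mixed1 {i : Fin d} {k l : ℕ} (hkl : k ≤ l) {x : Fin d → ℕ} (h : x i ≠ l) :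
    delIdx i (l + 1) (insIdx i k x) = insIdx i k (delIdx i l x) := by
  funext ℓ
  by_cases hℓ : ℓ = i
  · subst hℓ; simp only [insIdx, delIdx, if_pos rfl]; split_ifs <;> omega
  · simp [insIdx, delIdx, hℓ]

lemma mixed2 {i : Fin d} {k l : ℕ} (hkl : k < l) (x : Fin d → ℕ) :
    insIdx i l (insIdx i k x) = insIdx i k (insIdx i (l - 1) x) := by
  funext ℓ
  by_cases hℓ : ℓ = i
  · subst hℓ; simp only [insIdx, if_pos rfl]; split_ifs <;> omega
  · simp [insIdx, hℓ]

lemma steps_zero {R : Fin d → Arr q d → Arr q d → Prop} {t : Fin d → ℕ} {A B : Arr q d}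
    (h : Steps R t A B) (ht : t = 0) : A = B := by
  cases h with
  | refl => rfl
  | step i h1 h2 =>
    have := congrFun ht i
    simp at this

lemma steps_single_aux {R : Fin d → Arr q d → Arr q d → Prop} {t : Fin d → ℕ}
    {A B : Arr q d} (h : Steps R t A B) :
    ∀ i : Fin d, t = Pi.single i 1 → R i A B := by
  induction h with
  | refl A =>
    intro i hi
    have := congrFun hi i
    simp at this
  | @step t' A' B' C' i' h1 h2 ih =>
    intro i hi
    have hii : i' = i := by
      by_contra hne
      have := congrFun hi i'
      simp [Pi.single_apply, hne] at this
    subst hii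
    have ht0 : t' = 0 := by
      funext ℓ
      have := congrFun hi ℓ
      simp only [Pi.add_apply, Pi.single_apply, Pi.zero_apply] at this ⊢
      by_cases hℓ : ℓ = i' <;> simp [hℓ] at this ⊢ <;> omega
    rw [steps_zero h2 ht0] at h1
    exact h1

lemma steps_single_iff {R : Fin d → Arr q d → Arr q d → Prop} {i : Fin d}
    {A B : Arr q d} : Steps R (Pi.single i 1) A B ↔ R i A B := by
  constructor
  · exact fun h => steps_single_aux h i rfl
  · intro h
    have := Steps.step i h (Steps.refl B)
    rwa [zero_add] at this

end Aux
section Diamond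

variable {q d : ℕ}

lemma up_eq {i : Fin d} {Z X Y : Arr q d} {k l : ℕ}
    (hk : k ≤ Z.size i) (hl : l ≤ Z.size i) (hkl : k ≤ l)
    (hsX : ∀ ℓ, X.size ℓ = if ℓ = i then Z.size ℓ + 1 else Z.size ℓ)
    (hvX : ∀ (x : Fin d → ℕ) (hx : ∀ ℓ, x ℓ < Z.size ℓ)
      (hx' : ∀ ℓ, insIdx i k x ℓ < X.size ℓ), Z.val x hx = X.val (insIdx i k x) hx')
    (hsY : ∀ ℓ, Y.size ℓ = if ℓ = i then Z.size ℓ + 1 else Z.size ℓ)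
    (hvY : ∀ (x : Fin d → ℕ) (hx : ∀ ℓ, x ℓ < Z.size ℓ)
      (hx' : ∀ ℓ, insIdx i l x ℓ < Y.size ℓ), Z.val x hx = Y.val (insIdx i l x) hx') :
    ∃ W, InsertsTo i X W ∧ InsertsTo i Y W := by
  classical
  have pf1 : ∀ x : Fin d → ℕ, (∀ ℓ, x ℓ < if ℓ = i then X.size ℓ + 1 else X.size ℓ) →
      x i = l + 1 → ∀ ℓ, delIdx i k x ℓ < Y.size ℓ := by
    intro x hx hxi ℓ
    have h1 := hx ℓ
    have h2 := hsX ℓ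
    have h3 := hsY ℓ
    by_cases hℓ : ℓ = i
    · subst hℓ
      rw [delIdx_self]
      rw [if_pos rfl] at h1 h2 h3
      split_ifs <;> omega
    · rw [delIdx_ne hℓ]
      simp only [if_neg hℓ] at h1 h2 h3
      omega
  have pf2 : ∀ x : Fin d → ℕ, (∀ ℓ, x ℓ < if ℓ = i then X.size ℓ + 1 else X.size ℓ) →
      ¬(x i = l + 1) → ∀ ℓ, delIdx i (l + 1) x ℓ < X.size ℓ := by
    intro x hx hxi ℓ
    have h1 := hx ℓ
    have h2 := hsX ℓ
    by_cases hℓ : ℓ = i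
    · subst hℓ
      rw [delIdx_self]
      rw [if_pos rfl] at h1 h2
      split_ifs <;> omega
    · rw [delIdx_ne hℓ]
      simp only [if_neg hℓ] at h1 h2
      omega
  refine ⟨⟨fun ℓ => if ℓ = i then X.size ℓ + 1 else X.size ℓ, fun x h =>
      if hxi : x i = l + 1 then Y.val (delIdx i k x) (pf1 x h hxi)
      else X.val (delIdx i (l + 1) x) (pf2 x h hxi)⟩,
    ⟨fun ℓ => rfl, l + 1, ?_, ?_⟩, ⟨?_, k, ?_, ?_⟩⟩
  · have := hsX i; rw [if_pos rfl] at this; omega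
  · intro x hx hx'
    have hne : ¬(insIdx i (l + 1) x i = l + 1) := by
      rw [insIdx_self]; split_ifs <;> omega
    show X.val x hx = dite _ _ _
    rw [dif_neg hne]
    exact X.val_cast (delIdx_insIdx i (l + 1) x).symm hx _
  · intro ℓ
    have h2 := hsX ℓ
    have h3 := hsY ℓ
    by_cases hℓ : ℓ = i <;> simp [hℓ] at h2 h3 ⊢ <;> omega
  · have := hsY i; rw [if_pos rfl] at this; omega
  · intro y hy hw
    by_cases hyl : y i = l
    · have hpos : insIdx i k y i = l + 1 := by
        rw [insIdx_self]; split_ifs <;> omega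
      show Y.val y hy = dite _ _ _
      rw [dif_pos hpos]
      exact Y.val_cast (delIdx_insIdx i k y).symm hy _
    · have hneg : ¬(insIdx i k y i = l + 1) := by
        rw [insIdx_self]; split_ifs <;> omega
      show Y.val y hy = dite _ _ _
      rw [dif_neg hneg]
      have hz : ∀ ℓ, delIdx i l y ℓ < Z.size ℓ := by
        intro ℓ
        have h1 := hy ℓ
        have h3 := hsY ℓ
        by_cases hℓ : ℓ = i
        · subst hℓ
          rw [delIdx_self]
          rw [if_pos rfl] at h3
          split_ifs <;> omega
        · rw [delIdx_ne hℓ]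
          simp only [if_neg hℓ] at h3
          omega
      have hins : insIdx i l (delIdx i l y) = y := insIdx_delIdx hyl
      have hy2 : ∀ ℓ, insIdx i l (delIdx i l y) ℓ < Y.size ℓ := by
        rw [hins]; exact hy
      have e1 := hvY (delIdx i l y) hz hy2
      have e1' : Y.val (insIdx i l (delIdx i l y)) hy2 = Y.val y hy :=
        Y.val_cast hins _ _
      have hx2 : ∀ ℓ, insIdx i k (delIdx i l y) ℓ < X.size ℓ := by
        intro ℓ
        have h1 := hy ℓ
        have h2 := hsX ℓ
        have h3 := hsY ℓ
        by_cases hℓ : ℓ = i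
        · subst hℓ
          rw [insIdx_self, delIdx_self]
          rw [if_pos rfl] at h2 h3
          split_ifs <;> omega
        · rw [insIdx_ne hℓ, delIdx_ne hℓ]
          simp only [if_neg hℓ] at h2 h3
          omega
      have e2 := hvX (delIdx i l y) hz hx2
      rw [← e1', ← e1, e2]
      exact X.val_cast (mixed1 hkl hyl).symm _ _

lemma up_ne (hq : 2 ≤ q) {i j : Fin d} (hij : i ≠ j) {Z X Y : Arr q d} {k l : ℕ}
    (hk : k ≤ Z.size i) (hl : l ≤ Z.size j)
    (hsX : ∀ ℓ, X.size ℓ = if ℓ = i then Z.size ℓ + 1 else Z.size ℓ)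
    (hvX : ∀ (x : Fin d → ℕ) (hx : ∀ ℓ, x ℓ < Z.size ℓ)
      (hx' : ∀ ℓ, insIdx i k x ℓ < X.size ℓ), Z.val x hx = X.val (insIdx i k x) hx')
    (hsY : ∀ ℓ, Y.size ℓ = if ℓ = j then Z.size ℓ + 1 else Z.size ℓ)
    (hvY : ∀ (x : Fin d → ℕ) (hx : ∀ ℓ, x ℓ < Z.size ℓ)
      (hx' : ∀ ℓ, insIdx j l x ℓ < Y.size ℓ), Z.val x hx = Y.val (insIdx j l x) hx') :
    ∃ W, InsertsTo j X W ∧ InsertsTo i Y W := by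
  classical
  have pf1 : ∀ x : Fin d → ℕ, (∀ ℓ, x ℓ < if ℓ = j then X.size ℓ + 1 else X.size ℓ) →
      x j = l → ¬(x i = k) → ∀ ℓ, delIdx i k x ℓ < Y.size ℓ := by
    intro x hx hxj hxi ℓ
    have h1 := hx ℓ
    have h2 := hsX ℓ
    have h3 := hsY ℓ
    by_cases hℓi : ℓ = i
    · subst hℓi
      rw [delIdx_self]
      rw [if_neg hij] at h1 h3
      rw [if_pos rfl] at h2
      split_ifs <;> omega
    · rw [delIdx_ne hℓi]
      rw [if_neg hℓi] at h2
      by_cases hℓj : ℓ = j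
      · subst hℓj
        rw [if_pos rfl] at h1 h3
        omega
      · rw [if_neg hℓj] at h1 h3
        omega
  have pf2 : ∀ x : Fin d → ℕ, (∀ ℓ, x ℓ < if ℓ = j then X.size ℓ + 1 else X.size ℓ) →
      ¬(x j = l) → ∀ ℓ, delIdx j l x ℓ < X.size ℓ := by
    intro x hx hxj ℓ
    have h1 := hx ℓ
    have h2 := hsX ℓ
    by_cases hℓj : ℓ = j
    · subst hℓj
      rw [delIdx_self]
      rw [if_pos rfl] at h1
      rw [if_neg (Ne.symm hij)] at h2
      split_ifs <;> omega
    · rw [delIdx_ne hℓj]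
      rw [if_neg hℓj] at h1
      omega
  refine ⟨⟨fun ℓ => if ℓ = j then X.size ℓ + 1 else X.size ℓ, fun x h =>
      if hxj : x j = l then
        (if hxi : x i = k then (⟨0, by omega⟩ : Fin q)
         else Y.val (delIdx i k x) (pf1 x h hxj hxi))
      else X.val (delIdx j l x) (pf2 x h hxj)⟩,
    ⟨fun ℓ => rfl, l, ?_, ?_⟩, ⟨?_, k, ?_, ?_⟩⟩
  · have := hsX j; rw [if_neg (Ne.symm hij)] at this; omega
  · intro x hx hx'
    have hne : ¬(insIdx j l x j = l) := by
      rw [insIdx_self]; split_ifs <;> omega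
    show X.val x hx = dite _ _ _
    rw [dif_neg hne]
    exact X.val_cast (delIdx_insIdx j l x).symm hx _
  · intro ℓ
    have h2 := hsX ℓ
    have h3 := hsY ℓ
    by_cases hℓi : ℓ = i <;> by_cases hℓj : ℓ = j <;>
      simp_all [Ne.symm hij] <;> omega
  · have := hsY i; rw [if_neg hij] at this; omega
  · intro y hy hw
    have hyi : insIdx i k y j = y j := insIdx_ne (Ne.symm hij)
    by_cases hyl : y j = l
    · have hpos : insIdx i k y j = l := by rw [hyi, hyl]
      have hne : ¬(insIdx i k y i = k) := by
        rw [insIdx_self]; split_ifs <;> omega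
      show Y.val y hy = dite _ _ _
      rw [dif_pos hpos, dif_neg hne]
      exact Y.val_cast (delIdx_insIdx i k y).symm hy _
    · have hneg : ¬(insIdx i k y j = l) := by rw [hyi]; exact hyl
      show Y.val y hy = dite _ _ _
      rw [dif_neg hneg]
      have hz : ∀ ℓ, delIdx j l y ℓ < Z.size ℓ := by
        intro ℓ
        have h1 := hy ℓ
        have h3 := hsY ℓ
        by_cases hℓj : ℓ = j
        · subst hℓj
          rw [delIdx_self]
          rw [if_pos rfl] at h3
          split_ifs <;> omega
        · rw [delIdx_ne hℓj]
          rw [if_neg hℓj] at h3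
          omega
      have hins : insIdx j l (delIdx j l y) = y := insIdx_delIdx hyl
      have hy2 : ∀ ℓ, insIdx j l (delIdx j l y) ℓ < Y.size ℓ := by
        rw [hins]; exact hy
      have e1 := hvY (delIdx j l y) hz hy2
      have e1' : Y.val (insIdx j l (delIdx j l y)) hy2 = Y.val y hy :=
        Y.val_cast hins _ _
      have hx2 : ∀ ℓ, insIdx i k (delIdx j l y) ℓ < X.size ℓ := by
        intro ℓ
        have h1 := hy ℓ
        have h2 := hsX ℓ
        have h3 := hsY ℓ
        by_cases hℓi : ℓ = i
        · subst hℓi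
          rw [insIdx_self, delIdx_ne hij]
          rw [if_pos rfl] at h2
          rw [if_neg hij] at h3
          split_ifs <;> omega
        · rw [insIdx_ne hℓi]
          rw [if_neg hℓi] at h2
          by_cases hℓj : ℓ = j
          · subst hℓj
            rw [delIdx_self]
            rw [if_pos rfl] at h3
            split_ifs <;> omega
          · rw [delIdx_ne hℓj]
            rw [if_neg hℓj] at h3
            omega
      have e2 := hvX (delIdx j l y) hz hx2
      rw [← e1', ← e1, e2]
      refine X.val_cast ?_ _ _
      rw [delIdx_insIdx_comm hij]
lemma down_ne {i j : Fin d} (hij : i ≠ j) {X Y W : Arr q d} {k l : ℕ}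
    (hsX : ∀ ℓ, W.size ℓ = if ℓ = j then X.size ℓ + 1 else X.size ℓ)
    (hl : l ≤ X.size j)
    (hvX : ∀ (x : Fin d → ℕ) (hx : ∀ ℓ, x ℓ < X.size ℓ)
      (hx' : ∀ ℓ, insIdx j l x ℓ < W.size ℓ), X.val x hx = W.val (insIdx j l x) hx')
    (hsY : ∀ ℓ, W.size ℓ = if ℓ = i then Y.size ℓ + 1 else Y.size ℓ)
    (hk : k ≤ Y.size i)
    (hvY : ∀ (y : Fin d → ℕ) (hy : ∀ ℓ, y ℓ < Y.size ℓ)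
      (hy' : ∀ ℓ, insIdx i k y ℓ < W.size ℓ), Y.val y hy = W.val (insIdx i k y) hy') :
    ∃ Z, InsertsTo i Z X ∧ InsertsTo j Z Y := by
  classical
  have hXi : X.size i = Y.size i + 1 := by
    have h1 := hsX i; have h2 := hsY i
    rw [if_neg hij] at h1; rw [if_pos rfl] at h2; omega
  have hYj : Y.size j = X.size j + 1 := by
    have h1 := hsX j; have h2 := hsY j
    rw [if_pos rfl] at h1; rw [if_neg (Ne.symm hij)] at h2; omega
  have hXY : ∀ ℓ, ℓ ≠ i → ℓ ≠ j → X.size ℓ = Y.size ℓ := by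
    intro ℓ h1 h2
    have e1 := hsX ℓ; have e2 := hsY ℓ
    rw [if_neg h2] at e1; rw [if_neg h1] at e2; omega
  have pf : ∀ z : Fin d → ℕ, (∀ ℓ, z ℓ < if ℓ = i then Y.size ℓ else X.size ℓ) →
      ∀ ℓ, insIdx i k (insIdx j l z) ℓ < W.size ℓ := by
    intro z hz ℓ
    have h1 := hz ℓ
    have h2 := hsX ℓ
    by_cases hℓi : ℓ = i
    · subst hℓi
      rw [insIdx_self, insIdx_ne hij]
      rw [if_pos rfl] at h1
      rw [if_neg hij] at h2
      split_ifs <;> omega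
    · rw [insIdx_ne hℓi]
      rw [if_neg hℓi] at h1
      by_cases hℓj : ℓ = j
      · subst hℓj
        rw [insIdx_self]
        rw [if_pos rfl] at h2
        split_ifs <;> omega
      · rw [insIdx_ne hℓj]
        rw [if_neg hℓj] at h2
        omega
  refine ⟨⟨fun ℓ => if ℓ = i then Y.size ℓ else X.size ℓ, fun z hz =>
      W.val (insIdx i k (insIdx j l z)) (pf z hz)⟩, ⟨?_, k, ?_, ?_⟩, ⟨?_, l, ?_, ?_⟩⟩
  · intro ℓ
    dsimp only
    by_cases hℓi : ℓ = i
    · subst hℓi; rw [if_pos rfl, if_pos rfl]; omega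
    · rw [if_neg hℓi, if_neg hℓi]
  · dsimp only; rw [if_pos rfl]; exact hk
  · intro z hz hx'
    have hb : ∀ ℓ, insIdx j l (insIdx i k z) ℓ < W.size ℓ := by
      rw [← insIdx_comm hij]; exact pf z hz
    have e := hvX (insIdx i k z) hx' hb
    exact (W.val_cast (insIdx_comm hij k l z) _ _).trans e.symm
  · intro ℓ
    dsimp only
    by_cases hℓj : ℓ = j
    · subst hℓj
      rw [if_pos rfl, if_neg (Ne.symm hij), hYj]
    · rw [if_neg hℓj]
      by_cases hℓi : ℓ = i
      · subst hℓi; rw [if_pos rfl]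
      · rw [if_neg hℓi]; exact (hXY ℓ hℓi hℓj).symm
  · dsimp only; rw [if_neg (Ne.symm hij)]; exact hl
  · intro z hz hy'
    exact (hvY (insIdx j l z) hy' (pf z hz)).symm

lemma down_eq {i : Fin d} {X Y W : Arr q d} {k l : ℕ}
    (hpos : 1 ≤ X.size i) (hkl : k ≤ l)
    (hsX : ∀ ℓ, W.size ℓ = if ℓ = i then X.size ℓ + 1 else X.size ℓ)
    (hl : l ≤ X.size i)
    (hvX : ∀ (x : Fin d → ℕ) (hx : ∀ ℓ, x ℓ < X.size ℓ)
      (hx' : ∀ ℓ, insIdx i l x ℓ < W.size ℓ), X.val x hx = W.val (insIdx i l x) hx')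
    (hsY : ∀ ℓ, W.size ℓ = if ℓ = i then Y.size ℓ + 1 else Y.size ℓ)
    (hk : k ≤ Y.size i)
    (hvY : ∀ (y : Fin d → ℕ) (hy : ∀ ℓ, y ℓ < Y.size ℓ)
      (hy' : ∀ ℓ, insIdx i k y ℓ < W.size ℓ), Y.val y hy = W.val (insIdx i k y) hy') :
    ∃ Z, InsertsTo i Z X ∧ InsertsTo i Z Y := by
  classical
  have hXY : ∀ ℓ, X.size ℓ = Y.size ℓ := by
    intro ℓ
    have e1 := hsX ℓ; have e2 := hsY ℓ
    by_cases hℓ : ℓ = i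
    · rw [if_pos hℓ] at e1 e2; omega
    · rw [if_neg hℓ] at e1 e2; omega
  rcases eq_or_lt_of_le hkl with heq | hlt
  · -- k = l
    subst heq
    have pfa : ∀ z : Fin d → ℕ, (∀ ℓ, z ℓ < if ℓ = i then X.size ℓ - 1 else X.size ℓ) →
        ∀ ℓ, insIdx i 0 z ℓ < X.size ℓ := by
      intro z hz ℓ
      have h1 := hz ℓ
      by_cases hℓ : ℓ = i
      · subst hℓ
        rw [insIdx_self]
        rw [if_pos rfl] at h1
        split_ifs <;> omega
      · rw [insIdx_ne hℓ]
        rw [if_neg hℓ] at h1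
        exact h1
    refine ⟨⟨fun ℓ => if ℓ = i then X.size ℓ - 1 else X.size ℓ, fun z hz =>
        X.val (insIdx i 0 z) (pfa z hz)⟩, ⟨?_, 0, ?_, ?_⟩, ⟨?_, 0, ?_, ?_⟩⟩
    · intro ℓ
      dsimp only
      by_cases hℓ : ℓ = i
      · subst hℓ; rw [if_pos rfl, if_pos rfl]; omega
      · rw [if_neg hℓ, if_neg hℓ]
    · exact Nat.zero_le _
    · intro z hz hx'
      exact X.val_cast rfl _ _
    · intro ℓ
      dsimp only
      by_cases hℓ : ℓ = i
      · subst hℓ; rw [if_pos rfl, if_pos rfl, ← hXY]; omega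
      · rw [if_neg hℓ, if_neg hℓ, ← hXY]
    · exact Nat.zero_le _
    · intro z hz hy'
      have hbX : ∀ ℓ, insIdx i k (insIdx i 0 z) ℓ < W.size ℓ := by
        intro ℓ
        have h1 := hz ℓ
        dsimp only at h1
        have h2 := hsX ℓ
        by_cases hℓ : ℓ = i
        · subst hℓ
          rw [insIdx_self, insIdx_self]
          rw [if_pos rfl] at h1 h2
          split_ifs <;> omega
        · rw [insIdx_ne hℓ, insIdx_ne hℓ]
          rw [if_neg hℓ] at h1 h2
          omega
      have e1 := hvX (insIdx i 0 z) (pfa z hz) hbX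
      have e2 := hvY (insIdx i 0 z) hy' hbX
      exact e1.trans e2.symm
  · -- k < l
    have pfb : ∀ z : Fin d → ℕ, (∀ ℓ, z ℓ < if ℓ = i then X.size ℓ - 1 else X.size ℓ) →
        ∀ ℓ, insIdx i k z ℓ < X.size ℓ := by
      intro z hz ℓ
      have h1 := hz ℓ
      by_cases hℓ : ℓ = i
      · subst hℓ
        rw [insIdx_self]
        rw [if_pos rfl] at h1
        split_ifs <;> omega
      · rw [insIdx_ne hℓ]
        rw [if_neg hℓ] at h1
        exact h1
    refine ⟨⟨fun ℓ => if ℓ = i then X.size ℓ - 1 else X.size ℓ, fun z hz =>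
        X.val (insIdx i k z) (pfb z hz)⟩, ⟨?_, k, ?_, ?_⟩, ⟨?_, l - 1, ?_, ?_⟩⟩
    · intro ℓ
      dsimp only
      by_cases hℓ : ℓ = i
      · subst hℓ; rw [if_pos rfl, if_pos rfl]; omega
      · rw [if_neg hℓ, if_neg hℓ]
    · dsimp only; rw [if_pos rfl]; omega
    · intro z hz hx'
      exact X.val_cast rfl _ _
    · intro ℓ
      dsimp only
      by_cases hℓ : ℓ = i
      · subst hℓ; rw [if_pos rfl, if_pos rfl, ← hXY]; omega
      · rw [if_neg hℓ, if_neg hℓ, ← hXY]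
    · dsimp only; rw [if_pos rfl]; omega
    · intro z hz hy'
      have hb1 : ∀ ℓ, insIdx i l (insIdx i k z) ℓ < W.size ℓ := by
        intro ℓ
        have h1 := hz ℓ
        dsimp only at h1
        have h2 := hsX ℓ
        by_cases hℓ : ℓ = i
        · subst hℓ
          rw [insIdx_self, insIdx_self]
          rw [if_pos rfl] at h1 h2
          split_ifs <;> omega
        · rw [insIdx_ne hℓ, insIdx_ne hℓ]
          rw [if_neg hℓ] at h1 h2
          omega
      have hb2 : ∀ ℓ, insIdx i k (insIdx i (l - 1) z) ℓ < W.size ℓ := by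
        rw [← mixed2 hlt]; exact hb1
      have e1 := hvX (insIdx i k z) (pfb z hz) hb1
      have e2 := hvY (insIdx i (l - 1) z) hy' hb2
      exact e1.trans ((W.val_cast (mixed2 hlt z) _ _).trans e2.symm)

end Diamond
/-- **Lemma 3.** For positive integers `m₁, …, m_d` and `i, j ∈ [d]`, and any arrays
`X` of size `(m₁+δ₁(i)) × ⋯ × (m_d+δ_d(i))` and `Y` of size `(m₁+δ₁(j)) × ⋯ × (m_d+δ_d(j))`,
`D_{e_i}(X) ∩ D_{e_j}(Y) ≠ ∅ ↔ I_{e_j}(X) ∩ I_{e_i}(Y) ≠ ∅`. -/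
theorem statement5 (q d : ℕ) (hq : 2 ≤ q) (hd : 1 ≤ d)
    (m : Fin d → ℕ) (hm : ∀ ℓ, 0 < m ℓ) (i j : Fin d)
    (X Y : Arr q d)
    (hX : X.size = fun ℓ => m ℓ + if ℓ = i then 1 else 0)
    (hY : Y.size = fun ℓ => m ℓ + if ℓ = j then 1 else 0) :
    (delBall (Pi.single i 1) X ∩ delBall (Pi.single j 1) Y).Nonempty ↔
    (insBall (Pi.single j 1) X ∩ insBall (Pi.single i 1) Y).Nonempty := by
  have hpX : 1 ≤ X.size i := by rw [hX]; simp
  have hpY : 1 ≤ Y.size i := by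
    rw [hY]; have := hm i; by_cases h : i = j <;> simp [h] <;> omega
  constructor
  · rintro ⟨Z, hZX, hZY⟩
    have h1 : InsertsTo i Z X := (steps_single_iff (R := DeletesTo) (A := X) (B := Z)).mp hZX
    have h2 : InsertsTo j Z Y := (steps_single_iff (R := DeletesTo) (A := Y) (B := Z)).mp hZY
    obtain ⟨hs1, k, hk, hv1⟩ := h1
    obtain ⟨hs2, l, hl, hv2⟩ := h2
    by_cases hij : i = j
    · subst hij
      rcases le_total k l with h | h
      · obtain ⟨W, w1, w2⟩ := up_eq hk hl h hs1 hv1 hs2 hv2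
        exact ⟨W, steps_single_iff.mpr w1, steps_single_iff.mpr w2⟩
      · obtain ⟨W, w1, w2⟩ := up_eq hl hk h hs2 hv2 hs1 hv1
        exact ⟨W, steps_single_iff.mpr w2, steps_single_iff.mpr w1⟩
    · obtain ⟨W, w1, w2⟩ := up_ne hq hij hk hl hs1 hv1 hs2 hv2
      exact ⟨W, steps_single_iff.mpr w1, steps_single_iff.mpr w2⟩
  · rintro ⟨W, hXW, hYW⟩
    have h1 : InsertsTo j X W := (steps_single_iff (R := InsertsTo) (A := X) (B := W)).mp hXW
    have h2 : InsertsTo i Y W := (steps_single_iff (R := InsertsTo) (A := Y) (B := W)).mp hYW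
    obtain ⟨hs1, l, hl, hv1⟩ := h1
    obtain ⟨hs2, k, hk, hv2⟩ := h2
    by_cases hij : i = j
    · subst hij
      rcases le_total k l with h | h
      · obtain ⟨Z, z1, z2⟩ := down_eq hpX h hs1 hl hv1 hs2 hk hv2
        exact ⟨Z, steps_single_iff.mpr z1, steps_single_iff.mpr z2⟩
      · obtain ⟨Z, z1, z2⟩ := down_eq hpY h hs2 hk hv2 hs1 hl hv1
        exact ⟨Z, steps_single_iff.mpr z2, steps_single_iff.mpr z1⟩
    · obtain ⟨Z, z1, z2⟩ := down_ne hij hs1 hl hv1 hs2 hk hv2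
      exact ⟨Z, steps_single_iff.mpr z1, steps_single_iff.mpr z2⟩
end

section
/- (Theorem 4.) A code C ⊆ Σ_q^{n^{⊗d}} is a 𝟏^{(d)}-deletion-correcting code if and only if it is a 𝟏^{(d)}-insertion-correcting code; that is, the deletion balls D_{𝟏}(X), X ∈ C, are pairwise disjoint if and only if the insertion balls I_{𝟏}(X), X ∈ C, are pairwise disjoint, where 𝟏 = (1, …, 1) is the all-one vector of length d. -/
-- ### auxiliary

def shiftA {d : ℕ} (a x : Fin d → ℕ) : Fin d → ℕ :=
  fun j => if x j < a j then x j else x j + 1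

def shiftS {d : ℕ} (s : Finset (Fin d)) (a x : Fin d → ℕ) : Fin d → ℕ :=
  fun j => if j ∈ s then (if x j < a j then x j else x j + 1) else x j

def indC {d : ℕ} (s : Finset (Fin d)) : Fin d → ℕ := fun j => if j ∈ s then 1 else 0

lemma Arr.ext' {q d : ℕ} {A B : Arr q d} (h : A.size = B.size)
    (h2 : ∀ x hA hB, A.val x hA = B.val x hB) : A = B := by
  obtain ⟨sA, vA⟩ := A; obtain ⟨sB, vB⟩ := B
  dsimp at h; subst h
  simp only [Arr.mk.injEq, heq_eq_eq, true_and]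
  funext x hx; exact h2 x hx hx

lemma Arr.val_eq {q d : ℕ} (A : Arr q d) {x y : Fin d → ℕ} (h : x = y)
    (hx : ∀ i, x i < A.size i) (hy : ∀ i, y i < A.size i) :
    A.val x hx = A.val y hy := by subst h; rfl

lemma insExtract {q d : ℕ} {t : Fin d → ℕ} {X W : Arr q d}
    (h : Steps InsertsTo t X W) (ht : ∀ i, t i ≤ 1) :
    ∃ p : Fin d → ℕ, (∀ i, p i ≤ X.size i) ∧ (∀ i, t i = 0 → p i = X.size i) ∧
      (∀ i, W.size i = X.size i + t i) ∧
      ∀ x (hx : ∀ j, x j < X.size j) (hw : ∀ j, shiftA p x j < W.size j),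
        X.val x hx = W.val (shiftA p x) hw := by
  induction h with
  | refl A =>
    refine ⟨A.size, fun i => le_refl _, fun i _ => rfl, fun i => rfl, ?_⟩
    intro x hx hw
    exact A.val_eq (funext fun j => by simp [shiftA, hx j]) hx hw
  | step i h1 h2 ih =>
    rename_i t A B Cc
    have ht' : ∀ j, t j ≤ 1 := by
      intro j; have := ht j; simp [Pi.add_apply] at this ⊢; omega
    have hti : t i = 0 := by
      have := ht i; simp [Pi.add_apply, Pi.single_apply] at this; omega
    obtain ⟨hsz, k, hk, hval⟩ := h1
    obtain ⟨p, hp1, hp2, hp3, hp4⟩ := ih ht'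
    refine ⟨Function.update p i k, ?_, ?_, ?_, ?_⟩
    · intro j
      rcases eq_or_ne j i with rfl | hj
      · simpa using hk
      · rw [Function.update_of_ne hj]
        have := hp1 j; have := hsz j; simp [hj] at this ⊢; omega
    · intro j htj
      rcases eq_or_ne j i with rfl | hj
      · exfalso; simp [Pi.add_apply, Pi.single_apply] at htj
      · rw [Function.update_of_ne hj]
        have h0 : t j = 0 := by simpa [Pi.add_apply, Pi.single_apply, hj] using htj
        have := hp2 j h0; have := hsz j; simp [hj] at this ⊢; omega
    · intro j
      rcases eq_or_ne j i with rfl | hj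
      · have := hp3 j; have := hsz j
        simp [Pi.add_apply, Pi.single_apply] at this ⊢; omega
      · have := hp3 j; have := hsz j
        simp [Pi.add_apply, Pi.single_apply, hj] at this ⊢; omega
    · intro x hx hw
      have hBsz : ∀ j, B.size j = if j = i then A.size j + 1 else A.size j := hsz
      have hB : ∀ j, insIdx i k x j < B.size j := by
        intro j; have := hBsz j; rcases eq_or_ne j i with rfl | hj
        · simp [insIdx] at this ⊢; have := hx j; split <;> omega
        · simp [insIdx, hj] at this ⊢; rw [this]; exact hx j
      have hfe : shiftA p (insIdx i k x) = shiftA (Function.update p i k) x := by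
        funext j
        rcases eq_or_ne j i with rfl | hj
        · have hpB : p j = B.size j := hp2 j hti
          have hbj : B.size j = A.size j + 1 := by have := hBsz j; simpa using this
          have hxj := hx j
          simp only [shiftA, insIdx, if_pos rfl, Function.update_self]
          split_ifs <;> omega
        · simp only [shiftA, insIdx, if_neg hj, Function.update_of_ne hj]
      have hW : ∀ j, shiftA p (insIdx i k x) j < Cc.size j := by
        intro j; rw [hfe]; exact hw j
      calc A.val x hx = B.val (insIdx i k x) hB := hval x hx hB
        _ = Cc.val (shiftA p (insIdx i k x)) hW := hp4 _ hB hW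
        _ = Cc.val (shiftA (Function.update p i k) x) hw := Cc.val_eq hfe hW hw


lemma delExtract {q d : ℕ} {t : Fin d → ℕ} {X Z : Arr q d}
    (h : Steps DeletesTo t X Z) (ht : ∀ i, t i ≤ 1) :
    ∃ a : Fin d → ℕ, (∀ i, a i ≤ Z.size i) ∧ (∀ i, t i = 0 → a i = Z.size i) ∧
      (∀ i, X.size i = Z.size i + t i) ∧
      ∀ z (hz : ∀ j, z j < Z.size j) (hx : ∀ j, shiftA a z j < X.size j),
        Z.val z hz = X.val (shiftA a z) hx := by
  induction h with
  | refl A =>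
    refine ⟨A.size, fun i => le_refl _, fun i _ => rfl, fun i => rfl, ?_⟩
    intro z hz hx
    exact A.val_eq (funext fun j => by simp [shiftA, hz j]) hz hx
  | step i h1 h2 ih =>
    rename_i t A B Cc
    -- h1 : DeletesTo i A B, i.e. InsertsTo i B A; chain: A →del B →del* Cc
    have ht' : ∀ j, t j ≤ 1 := by
      intro j; have := ht j; simp [Pi.add_apply] at this ⊢; omega
    have hti : t i = 0 := by
      have := ht i; simp [Pi.add_apply, Pi.single_apply] at this; omega
    obtain ⟨hsz, k, hk, hval⟩ := h1
    obtain ⟨a, ha1, ha2, ha3, ha4⟩ := ih ht'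
    refine ⟨Function.update a i k, ?_, ?_, ?_, ?_⟩
    · intro j
      rcases eq_or_ne j i with rfl | hj
      · have hBi : B.size j = Cc.size j + t j := ha3 j
        simpa [hti] using hk.trans_eq (by omega)
      · rw [Function.update_of_ne hj]; exact ha1 j
    · intro j htj
      rcases eq_or_ne j i with rfl | hj
      · exfalso; simp [Pi.add_apply, Pi.single_apply] at htj
      · rw [Function.update_of_ne hj]
        exact ha2 j (by simpa [Pi.add_apply, Pi.single_apply, hj] using htj)
    · intro j
      have hBj := ha3 j; have hAj := hsz j
      rcases eq_or_ne j i with rfl | hj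
      · simp [Pi.add_apply, Pi.single_apply] at hAj ⊢; omega
      · simp [Pi.add_apply, Pi.single_apply, hj] at hAj ⊢; omega
    · intro z hz hx
      have hB : ∀ j, shiftA a z j < B.size j := by
        intro j
        have h3 := ha3 j; have h1 := ha1 j; have h2' := fun h0 => ha2 j h0
        have hzj := hz j
        have htj1 : t j ≤ 1 := ht' j
        simp only [shiftA]
        split
        · omega
        · rcases Nat.eq_zero_or_pos (t j) with h0 | h0
          · have := ha2 j h0; omega
          · omega
      have hfe : insIdx i k (shiftA a z) = shiftA (Function.update a i k) z := by
        funext j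
        rcases eq_or_ne j i with rfl | hj
        · have hai : a j = Cc.size j := ha2 j hti
          have hzj := hz j
          simp only [insIdx, shiftA, if_pos rfl, Function.update_self]
          split_ifs <;> omega
        · simp only [insIdx, shiftA, if_neg hj, Function.update_of_ne hj]
      have hA : ∀ j, insIdx i k (shiftA a z) j < A.size j := by
        intro j; rw [hfe]; exact hx j
      calc Cc.val z hz = B.val (shiftA a z) hB := ha4 z hz hB
        _ = A.val (insIdx i k (shiftA a z)) hA := hval _ hB hA
        _ = A.val (shiftA (Function.update a i k) z) hx := A.val_eq hfe hA hx

lemma indC_empty {d : ℕ} : indC (∅ : Finset (Fin d)) = 0 := by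
  funext j; simp [indC]

lemma indC_insert {d : ℕ} {s : Finset (Fin d)} {i : Fin d} (hi : i ∉ s) :
    indC (insert i s) = indC s + Pi.single i 1 := by
  funext j
  rcases eq_or_ne j i with rfl | hj
  · simp [indC, hi, Pi.single_apply]
  · simp [indC, hj, Pi.single_apply]

lemma insBuild {q d : ℕ} (a : Fin d → ℕ) (s : Finset (Fin d)) :
    ∀ (A W : Arr q d), (∀ j, a j ≤ A.size j) →
    (∀ j, W.size j = A.size j + indC s j) →
    (∀ x (hx : ∀ j, x j < A.size j) (hw : ∀ j, shiftS s a x j < W.size j),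
      A.val x hx = W.val (shiftS s a x) hw) →
    Steps InsertsTo (indC s) A W := by
  induction s using Finset.induction_on with
  | empty =>
    intro A W ha hsz hval
    have hAW : A = W := by
      refine Arr.ext' (funext fun j => by simpa [indC] using (hsz j).symm) ?_
      intro x hA hB
      have heq : shiftS ∅ a x = x := funext fun j => by simp [shiftS]
      have hw : ∀ j, shiftS ∅ a x j < W.size j := by
        intro j; rw [heq]; exact (heq ▸ hB) j
      exact (hval x hA hw).trans (W.val_eq heq hw hB)
    rw [indC_empty, hAW]; exact Steps.refl W
  | @insert i s hi ih =>
    intro A W ha hsz hval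
    have hBval : ∀ (x : Fin d → ℕ),
        (∀ j, x j < (fun j => if j = i then A.size j + 1 else A.size j) j) →
        ∀ j, shiftS s a x j < W.size j := by
      intro x hx j
      have hxj := hx j
      have hszj := hsz j
      have haj := ha j
      by_cases hj : j = i
      · subst hj
        simp only [shiftS, if_neg hi]
        simp [indC] at hszj hxj
        omega
      · simp only [if_neg hj] at hxj
        by_cases hjs : j ∈ s
        · simp only [shiftS, if_pos hjs]
          simp only [indC, Finset.mem_insert, hj, hjs, false_or, if_true] at hszj
          split_ifs <;> omega
        · simp only [shiftS, if_neg hjs]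
          simp only [indC, Finset.mem_insert, hj, hjs, false_or, if_false] at hszj
          omega
    set B : Arr q d :=
      ⟨fun j => if j = i then A.size j + 1 else A.size j,
       fun x hx => W.val (shiftS s a x) (hBval x hx)⟩ with hB
    have hBsize : ∀ j, B.size j = if j = i then A.size j + 1 else A.size j :=
      fun j => rfl
    have step1 : InsertsTo i A B := by
      refine ⟨fun j => rfl, a i, ha i, ?_⟩
      intro x hx hx'
      have hfe : shiftS s a (insIdx i (a i) x) = shiftS (insert i s) a x := by
        funext j
        by_cases hj : j = i
        · subst hj; simp [shiftS, insIdx, hi, Finset.mem_insert]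
        · simp [shiftS, insIdx, hj, Finset.mem_insert]
      have hw : ∀ j, shiftS (insert i s) a x j < W.size j := by
        intro j
        rw [← hfe]
        exact hBval _ (fun j' => by have := hx' j'; rwa [hBsize j'] at this) j
      calc A.val x hx = W.val (shiftS (insert i s) a x) hw := hval x hx hw
        _ = B.val (insIdx i (a i) x) hx' := W.val_eq hfe.symm hw _
    have step2 : Steps InsertsTo (indC s) B W := by
      refine ih B W ?_ ?_ ?_
      · intro j
        rw [hBsize j]
        have := ha j
        split_ifs <;> omega
      · intro j
        rw [hBsize j]
        have hszj := hsz j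
        by_cases hj : j = i
        · subst hj
          simp [indC, hi] at hszj ⊢ <;> omega
        · by_cases hjs : j ∈ s <;> simp [indC, hj, hjs] at hszj ⊢ <;> omega
      · intro x hx hw; rfl
    have := Steps.step i step1 step2
    rwa [← indC_insert hi] at this

lemma delBuild {q d : ℕ} (a : Fin d → ℕ) (s : Finset (Fin d)) :
    ∀ (A W : Arr q d), (∀ j, a j ≤ A.size j) →
    (∀ j, W.size j = A.size j + indC s j) →
    (∀ x (hx : ∀ j, x j < A.size j) (hw : ∀ j, shiftS s a x j < W.size j),
      A.val x hx = W.val (shiftS s a x) hw) →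
    Steps DeletesTo (indC s) W A := by
  induction s using Finset.induction_on with
  | empty =>
    intro A W ha hsz hval
    have hAW : A = W := by
      refine Arr.ext' (funext fun j => by simpa [indC] using (hsz j).symm) ?_
      intro x hA hB
      have heq : shiftS ∅ a x = x := funext fun j => by simp [shiftS]
      have hw : ∀ j, shiftS ∅ a x j < W.size j := by
        intro j; rw [heq]; exact (heq ▸ hB) j
      exact (hval x hA hw).trans (W.val_eq heq hw hB)
    rw [indC_empty, ← hAW]; exact Steps.refl A
  | @insert i s hi ih =>
    intro A W ha hsz hval
    have hBval : ∀ (x : Fin d → ℕ),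
        (∀ j, x j < (fun j => A.size j + indC s j) j) →
        ∀ j, insIdx i (a i) x j < W.size j := by
      intro x hx j
      have hxj := hx j
      have hszj := hsz j
      have haj := ha j
      by_cases hj : j = i
      · subst hj
        simp only [insIdx, if_pos rfl]
        simp [indC, hi] at hszj hxj
        split_ifs <;> omega
      · simp only [insIdx, if_neg hj]
        by_cases hjs : j ∈ s <;> simp [indC, hj, hjs] at hszj hxj ⊢ <;> omega
    set B : Arr q d :=
      ⟨fun j => A.size j + indC s j,
       fun x hx => W.val (insIdx i (a i) x) (hBval x hx)⟩ with hB
    have hBsize : ∀ j, B.size j = A.size j + indC s j := fun j => rfl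
    have step1 : DeletesTo i W B := by
      refine ⟨?_, a i, ?_, ?_⟩
      · intro j
        rw [hBsize j]
        have hszj := hsz j
        by_cases hj : j = i
        · subst hj
          simp [indC, hi] at hszj ⊢ <;> omega
        · by_cases hjs : j ∈ s <;> simp [indC, hj, hjs] at hszj ⊢ <;> omega
      · rw [hBsize i]
        exact (ha i).trans (Nat.le_add_right _ _)
      · intro x hx hx'; rfl
    have step2 : Steps DeletesTo (indC s) B A := by
      refine ih A B ha (fun j => rfl) ?_
      intro x hx hw
      have hfe : insIdx i (a i) (shiftS s a x) = shiftS (insert i s) a x := by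
        funext j
        by_cases hj : j = i
        · subst hj; simp [shiftS, insIdx, hi, Finset.mem_insert]
        · simp [shiftS, insIdx, hj, Finset.mem_insert]
      have hw2 : ∀ j, shiftS (insert i s) a x j < W.size j := by
        intro j
        rw [← hfe]
        exact hBval _ (fun j' => by have := hw j'; rwa [hBsize j'] at this) j
      calc A.val x hx = W.val (shiftS (insert i s) a x) hw2 := hval x hx hw2
        _ = B.val (shiftS s a x) hw := W.val_eq hfe.symm hw2 _
    have := Steps.step i step1 step2
    rwa [← indC_insert hi] at this

def unshift (k w : ℕ) : ℕ := if w < k then w else w - 1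

lemma axisA (n a b w : ℕ) (ha : a ≤ n - 1) (hb : b ≤ n - 1) (hn : 1 ≤ n)
    (hw : w < n + 1)
    (h1 : w ≠ (if a ≤ b then b + 1 else b)) (h2 : w ≠ (if a ≤ b then a else a + 1)) :
    ∃ z, z < n - 1 ∧
      (if z < a then z else z + 1) = unshift (if a ≤ b then b + 1 else b) w ∧
      (if z < b then z else z + 1) = unshift (if a ≤ b then a else a + 1) w := by
  unfold unshift
  refine ⟨if w ≤ min a b then w else if w ≤ max a b then w - 1 else w - 2, ?_, ?_, ?_⟩ <;>
    split_ifs at h1 h2 ⊢ <;> omega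

lemma axisB (p p' z : ℕ) :
    (fun y => if y < p then y else y + 1)
      (if z < (if p = p' then 0 else if p < p' then p' - 1 else p') then z else z + 1) =
    (fun y => if y < p' then y else y + 1)
      (if z < (if p = p' then 0 else if p < p' then p else p - 1) then z else z + 1) := by
  dsimp only
  split_ifs <;> omega

lemma cube_zero_unique {q d : ℕ} (hd : 1 ≤ d) {A B : Arr q d}
    (hA : A ∈ cube q d 0) (hB : B ∈ cube q d 0) : A = B := by
  have hA' : A.size = fun _ => 0 := hA
  have hB' : B.size = fun _ => 0 := hB
  refine Arr.ext' (hA'.trans hB'.symm) ?_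
  intro x hxA hxB
  have := hxA ⟨0, hd⟩
  rw [hA'] at this
  exact absurd this (by simp)

lemma crossing {q d n : ℕ} (hq : 2 ≤ q) (hn : 1 ≤ n) {X Y Z : Arr q d}
    (hXs : ∀ i, X.size i = n) (hYs : ∀ i, Y.size i = n) (hZs : ∀ i, Z.size i = n - 1)
    (a b : Fin d → ℕ) (ha : ∀ i, a i ≤ n - 1) (hb : ∀ i, b i ≤ n - 1)
    (hZX : ∀ z (hz : ∀ j, z j < Z.size j) (hx : ∀ j, shiftA a z j < X.size j),
      Z.val z hz = X.val (shiftA a z) hx)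
    (hZY : ∀ z (hz : ∀ j, z j < Z.size j) (hy : ∀ j, shiftA b z j < Y.size j),
      Z.val z hz = Y.val (shiftA b z) hy) :
    ∃ W, Steps InsertsTo (fun _ => 1) X W ∧ Steps InsertsTo (fun _ => 1) Y W := by
  classical
  set kX : Fin d → ℕ := fun i => if a i ≤ b i then b i + 1 else b i with hkX
  set kY : Fin d → ℕ := fun i => if a i ≤ b i then a i else a i + 1 with hkY
  have hkXn : ∀ i, kX i ≤ n := by
    intro i; have := ha i; have := hb i; simp only [hkX]; split_ifs <;> omega
  have hkYn : ∀ i, kY i ≤ n := by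
    intro i; have := ha i; have := hb i; simp only [hkY]; split_ifs <;> omega
  have pfX : ∀ (w : Fin d → ℕ), (∀ i, w i < n + 1) → (∀ i, w i ≠ kX i) →
      ∀ i, unshift (kX i) (w i) < X.size i := by
    intro w hw h1 i
    rw [hXs i]
    have := hw i; have := h1 i; have := hkXn i
    unfold unshift; split_ifs <;> omega
  have pfY : ∀ (w : Fin d → ℕ), (∀ i, w i < n + 1) → (∀ i, w i ≠ kY i) →
      ∀ i, unshift (kY i) (w i) < Y.size i := by
    intro w hw h2 i
    rw [hYs i]
    have := hw i; have := h2 i; have := hkYn i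
    unfold unshift; split_ifs <;> omega
  set W : Arr q d :=
    ⟨fun _ => n + 1, fun w hw =>
      if h1 : ∀ i, w i ≠ kX i then X.val (fun i => unshift (kX i) (w i)) (pfX w hw h1)
      else if h2 : ∀ i, w i ≠ kY i then Y.val (fun i => unshift (kY i) (w i)) (pfY w hw h2)
      else ⟨0, by omega⟩⟩ with hW
  have hWs : ∀ j, W.size j = n + 1 := fun j => rfl
  have hWX : ∀ w (hw : ∀ i, w i < n + 1) (h1 : ∀ i, w i ≠ kX i)
      (hx : ∀ i, unshift (kX i) (w i) < X.size i),
      W.val w hw = X.val (fun i => unshift (kX i) (w i)) hx := by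
    intro w hw h1 hx
    exact dif_pos h1
  have hWY : ∀ w (hw : ∀ i, w i < n + 1) (h1 : ¬ ∀ i, w i ≠ kX i) (h2 : ∀ i, w i ≠ kY i)
      (hy : ∀ i, unshift (kY i) (w i) < Y.size i),
      W.val w hw = Y.val (fun i => unshift (kY i) (w i)) hy := by
    intro w hw h1 h2 hy
    show dite _ _ _ = _
    rw [dif_neg h1, dif_pos h2]
  -- consistency
  have key : ∀ (w : Fin d → ℕ) (hw : ∀ i, w i < n + 1) (h1 : ∀ i, w i ≠ kX i) (h2 : ∀ i, w i ≠ kY i)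
      (hx : ∀ i, unshift (kX i) (w i) < X.size i)
      (hy : ∀ i, unshift (kY i) (w i) < Y.size i),
      X.val (fun i => unshift (kX i) (w i)) hx = Y.val (fun i => unshift (kY i) (w i)) hy := by
    intro w hw h1 h2 hx hy
    have hex : ∀ i, ∃ z, z < n - 1 ∧
        (if z < a i then z else z + 1) = unshift (kX i) (w i) ∧
        (if z < b i then z else z + 1) = unshift (kY i) (w i) :=
      fun i => axisA n (a i) (b i) (w i) (ha i) (hb i) hn (hw i) (h1 i) (h2 i)
    choose z hz1 hz2 hz3 using hex
    have hzd : ∀ i, z i < Z.size i := fun i => (hZs i) ▸ hz1 i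
    have e1 : shiftA a z = fun i => unshift (kX i) (w i) := funext fun i => hz2 i
    have e2 : shiftA b z = fun i => unshift (kY i) (w i) := funext fun i => hz3 i
    have hx' : ∀ j, shiftA a z j < X.size j := by
      intro j; rw [congrFun e1 j]; exact hx j
    have hy' : ∀ j, shiftA b z j < Y.size j := by
      intro j; rw [congrFun e2 j]; exact hy j
    calc X.val (fun i => unshift (kX i) (w i)) hx
        = X.val (shiftA a z) hx' := X.val_eq e1.symm hx hx'
      _ = Z.val z hzd := (hZX z hzd hx').symm
      _ = Y.val (shiftA b z) hy' := hZY z hzd hy'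
      _ = Y.val (fun i => unshift (kY i) (w i)) hy := Y.val_eq e2 hy' hy
  refine ⟨W, ?_, ?_⟩
  · have := insBuild kX Finset.univ X W (fun j => (hXs j) ▸ hkXn j)
      (fun j => by simp [hWs j, hXs j, indC]) ?_
    · rwa [show indC (Finset.univ : Finset (Fin d)) = (fun _ => 1) from
        funext fun j => by simp [indC]] at this
    intro x hx hw
    have eS : shiftS Finset.univ kX x = shiftA kX x := funext fun j => by simp [shiftS, shiftA]
    have hw1 : ∀ i, shiftA kX x i < n + 1 := by
      intro i; have := hw i; rw [congrFun eS i] at this; exact (hWs i) ▸ this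
    have h1 : ∀ i, shiftA kX x i ≠ kX i := by
      intro i; simp only [shiftA]; split_ifs <;> omega
    have hxx : ∀ i, unshift (kX i) (shiftA kX x i) < X.size i := pfX _ hw1 h1
    have eu : (fun i => unshift (kX i) (shiftA kX x i)) = x := by
      funext i; simp only [shiftA, unshift]; split_ifs <;> omega
    calc X.val x hx = X.val (fun i => unshift (kX i) (shiftA kX x i)) hxx :=
          X.val_eq eu.symm hx hxx
      _ = W.val (shiftA kX x) (fun i => (hWs i) ▸ hw1 i) := (hWX _ hw1 h1 hxx).symm
      _ = W.val (shiftS Finset.univ kX x) hw := W.val_eq eS.symm _ hw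
  · have := insBuild kY Finset.univ Y W (fun j => (hYs j) ▸ hkYn j)
      (fun j => by simp [hWs j, hYs j, indC]) ?_
    · rwa [show indC (Finset.univ : Finset (Fin d)) = (fun _ => 1) from
        funext fun j => by simp [indC]] at this
    intro y hy hw
    have eS : shiftS Finset.univ kY y = shiftA kY y := funext fun j => by simp [shiftS, shiftA]
    have hw1 : ∀ i, shiftA kY y i < n + 1 := by
      intro i; have := hw i; rw [congrFun eS i] at this; exact (hWs i) ▸ this
    have h2 : ∀ i, shiftA kY y i ≠ kY i := by
      intro i; simp only [shiftA]; split_ifs <;> omega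
    have hyy : ∀ i, unshift (kY i) (shiftA kY y i) < Y.size i := pfY _ hw1 h2
    have eu : (fun i => unshift (kY i) (shiftA kY y i)) = y := by
      funext i; simp only [shiftA, unshift]; split_ifs <;> omega
    have main : Y.val y hy = W.val (shiftA kY y) (fun i => (hWs i) ▸ hw1 i) := by
      by_cases h1 : ∀ i, shiftA kY y i ≠ kX i
      · have hxx : ∀ i, unshift (kX i) (shiftA kY y i) < X.size i := pfX _ hw1 h1
        calc Y.val y hy = Y.val (fun i => unshift (kY i) (shiftA kY y i)) hyy :=
              Y.val_eq eu.symm hy hyy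
          _ = X.val (fun i => unshift (kX i) (shiftA kY y i)) hxx :=
              (key _ hw1 h1 h2 hxx hyy).symm
          _ = W.val (shiftA kY y) _ := (hWX _ hw1 h1 hxx).symm
      · calc Y.val y hy = Y.val (fun i => unshift (kY i) (shiftA kY y i)) hyy :=
              Y.val_eq eu.symm hy hyy
          _ = W.val (shiftA kY y) _ := (hWY _ hw1 h1 h2 hyy).symm
    calc Y.val y hy = W.val (shiftA kY y) (fun i => (hWs i) ▸ hw1 i) := main
      _ = W.val (shiftS Finset.univ kY y) hw := W.val_eq eS.symm _ hw

lemma crossing2 {q d n : ℕ} (hn : 1 ≤ n) {X Y W : Arr q d}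
    (hXs : ∀ i, X.size i = n) (hYs : ∀ i, Y.size i = n) (hWs : ∀ i, W.size i = n + 1)
    (p p' : Fin d → ℕ) (hp : ∀ i, p i ≤ n) (hp' : ∀ i, p' i ≤ n)
    (hXW : ∀ x (hx : ∀ j, x j < X.size j) (hw : ∀ j, shiftA p x j < W.size j),
      X.val x hx = W.val (shiftA p x) hw)
    (hYW : ∀ y (hy : ∀ j, y j < Y.size j) (hw : ∀ j, shiftA p' y j < W.size j),
      Y.val y hy = W.val (shiftA p' y) hw) :
    ∃ Z, Steps DeletesTo (fun _ => 1) X Z ∧ Steps DeletesTo (fun _ => 1) Y Z := by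
  classical
  set a : Fin d → ℕ := fun i => if p i = p' i then 0 else if p i < p' i then p' i - 1 else p' i
    with hadef
  set b : Fin d → ℕ := fun i => if p i = p' i then 0 else if p i < p' i then p i else p i - 1
    with hbdef
  have han : ∀ i, a i ≤ n - 1 := by
    intro i; have := hp i; have := hp' i; simp only [hadef]; split_ifs <;> omega
  have hbn : ∀ i, b i ≤ n - 1 := by
    intro i; have := hp i; have := hp' i; simp only [hbdef]; split_ifs <;> omega
  have pfZX : ∀ (z : Fin d → ℕ), (∀ j, z j < n - 1) → ∀ j, shiftA a z j < X.size j := by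
    intro z hz j; rw [hXs j]
    have := hz j; have := han j; simp only [shiftA]; split_ifs <;> omega
  have pfZY : ∀ (z : Fin d → ℕ), (∀ j, z j < n - 1) → ∀ j, shiftA b z j < Y.size j := by
    intro z hz j; rw [hYs j]
    have := hz j; have := hbn j; simp only [shiftA]; split_ifs <;> omega
  set Z : Arr q d :=
    ⟨fun _ => n - 1, fun z hz => X.val (shiftA a z) (pfZX z hz)⟩ with hZ
  have hZs : ∀ j, Z.size j = n - 1 := fun j => rfl
  have hZval : ∀ z (hz : ∀ j, z j < n - 1) (hx : ∀ j, shiftA a z j < X.size j),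
      Z.val z hz = X.val (shiftA a z) hx := fun z hz hx => rfl
  have hZvalY : ∀ z (hz : ∀ j, z j < n - 1) (hy : ∀ j, shiftA b z j < Y.size j),
      Z.val z hz = Y.val (shiftA b z) hy := by
    intro z hz hy
    have hfe : shiftA p (shiftA a z) = shiftA p' (shiftA b z) := by
      funext j
      have := axisB (p j) (p' j) (z j)
      simpa [shiftA, hadef, hbdef] using this
    have hwx : ∀ j, shiftA p (shiftA a z) j < W.size j := by
      intro j; rw [hWs j]
      have h1 := pfZX z hz j; rw [hXs j] at h1
      simp only [shiftA] at h1 ⊢; split_ifs at h1 ⊢ <;> omega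
    have hwy : ∀ j, shiftA p' (shiftA b z) j < W.size j := by
      intro j; rw [← hfe]; exact hwx j
    calc Z.val z hz = X.val (shiftA a z) (pfZX z hz) := rfl
      _ = W.val (shiftA p (shiftA a z)) hwx := hXW _ (pfZX z hz) hwx
      _ = W.val (shiftA p' (shiftA b z)) hwy := W.val_eq hfe hwx hwy
      _ = Y.val (shiftA b z) hy := (hYW _ hy hwy).symm
  have eSa : ∀ z, shiftS Finset.univ a z = shiftA a z :=
    fun z => funext fun j => by simp [shiftS, shiftA]
  have eSb : ∀ z, shiftS Finset.univ b z = shiftA b z :=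
    fun z => funext fun j => by simp [shiftS, shiftA]
  have hind : indC (Finset.univ : Finset (Fin d)) = (fun _ => 1) :=
    funext fun j => by simp [indC]
  refine ⟨Z, ?_, ?_⟩
  · have := delBuild a Finset.univ Z X (fun j => (hZs j) ▸ han j)
      (fun j => by rw [hXs j, hZs j]; simp only [indC, Finset.mem_univ, if_true]; omega) ?_
    · rwa [hind] at this
    intro z hz hw
    have hw' : ∀ j, shiftA a z j < X.size j := by
      intro j; rw [← congrFun (eSa z) j]; exact hw j
    exact (hZval z hz hw').trans (X.val_eq (eSa z).symm hw' hw)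
  · have := delBuild b Finset.univ Z Y (fun j => (hZs j) ▸ hbn j)
      (fun j => by rw [hYs j, hZs j]; simp only [indC, Finset.mem_univ, if_true]; omega) ?_
    · rwa [hind] at this
    intro z hz hw
    have hw' : ∀ j, shiftA b z j < Y.size j := by
      intro j; rw [← congrFun (eSb z) j]; exact hw j
    exact (hZvalY z hz hw').trans (Y.val_eq (eSb z).symm hw' hw)

/-- **Theorem 4.** A code `C ⊆ Σ_q^{n^{⊗d}}` is a `𝟏^{(d)}`-deletion-correcting code iff
it is a `𝟏^{(d)}`-insertion-correcting code, where `𝟏 = (1, …, 1)`. -/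
theorem statement6 (q d n : ℕ) (hq : 2 ≤ q) (hd : 1 ≤ d)
    (C : Set (Arr q d)) (hC : C ⊆ cube q d n) :
    IsDelCode (fun _ => 1) C ↔ IsInsCode (fun _ => 1) C := by
  rcases Nat.eq_zero_or_pos n with rfl | hn
  · constructor <;> intro _ X hX Y hY hXY <;>
      exact absurd (cube_zero_unique hd (hC hX) (hC hY)) hXY
  · constructor
    · -- del-correcting → ins-correcting
      intro h X hX Y hY hXY
      rw [Set.eq_empty_iff_forall_notMem]
      rintro W ⟨hWX, hWY⟩
      have hWX' : Steps InsertsTo (fun _ => 1) X W := hWX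
      have hWY' : Steps InsertsTo (fun _ => 1) Y W := hWY
      obtain ⟨p, hp1, _, hp3, hp4⟩ := insExtract hWX' (fun i => le_refl 1)
      obtain ⟨p', hq1, _, hq3, hq4⟩ := insExtract hWY' (fun i => le_refl 1)
      have hXs : ∀ i, X.size i = n := fun i => congrFun (hC hX) i
      have hYs : ∀ i, Y.size i = n := fun i => congrFun (hC hY) i
      have hWs : ∀ i, W.size i = n + 1 := fun i => by
        have := hp3 i; rw [hXs i] at this; omega
      obtain ⟨Z, hZX, hZY⟩ := crossing2 hn hXs hYs hWs p p'
        (fun i => (hXs i) ▸ hp1 i) (fun i => (hYs i) ▸ hq1 i) hp4 hq4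
      exact Set.eq_empty_iff_forall_notMem.mp (h X hX Y hY hXY) Z ⟨hZX, hZY⟩
    · -- ins-correcting → del-correcting
      intro h X hX Y hY hXY
      rw [Set.eq_empty_iff_forall_notMem]
      rintro Z ⟨hZX, hZY⟩
      have hZX' : Steps DeletesTo (fun _ => 1) X Z := hZX
      have hZY' : Steps DeletesTo (fun _ => 1) Y Z := hZY
      obtain ⟨a, ha1, _, ha3, ha4⟩ := delExtract hZX' (fun i => le_refl 1)
      obtain ⟨b, hb1, _, hb3, hb4⟩ := delExtract hZY' (fun i => le_refl 1)
      have hXs : ∀ i, X.size i = n := fun i => congrFun (hC hX) i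
      have hYs : ∀ i, Y.size i = n := fun i => congrFun (hC hY) i
      have hZs : ∀ i, Z.size i = n - 1 := fun i => by
        have := ha3 i; rw [hXs i] at this; omega
      obtain ⟨W, hWX, hWY⟩ := crossing hq hn hXs hYs hZs a b
        (fun i => (hZs i) ▸ ha1 i) (fun i => (hZs i) ▸ hb1 i) ha4 hb4
      exact Set.eq_empty_iff_forall_notMem.mp (h X hX Y hY hXY) W ⟨hWX, hWY⟩
end
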